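/- Let n ≥ 1. The minimum length of a superpermutation on n symbols equals n + m, where m is the minimum over all lists p₀, p₁, …, p_{n!−1} containing each of the n! permutations of Fin n exactly once of the sum ∑_{i=0}^{n!−2} d(p_i, p_{i+1}), and d is the overlap distance. -/

import Mathlib

/-- A superpermutation on `n` symbols: a word over `Fin n` containing every
permutation of `Fin n` (viewed as the word `σ 0, σ 1, …, σ (n-1)`) as a
contiguous substring (infix). -/
def IsSuperperm (n : ℕ) (w : List (Fin n)) : Prop :=
  ∀ σ : Equiv.Perm (Fin n), List.ofFn ⇑σ <:+: w

/-- The overlap distance `d(s,t)`: the least `k` with `0 ≤ k ≤ n` such that the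
suffix of `s` of length `n - k` equals the prefix of `t` of length `n - k`. -/
noncomputable def ovd (n : ℕ) (s t : List (Fin n)) : ℕ :=
  sInf {k | k ≤ n ∧ s.drop k = t.take (n - k)}

section aux
variable {n : ℕ}

lemma ovd_mem_n (s t : List (Fin n)) (hs : s.length ≤ n) :
    n ∈ {k | k ≤ n ∧ s.drop k = t.take (n - k)} := by
  constructor
  · exact le_refl n
  · simp [List.drop_eq_nil_iff.mpr hs]

lemma ovd_le_n (s t : List (Fin n)) (hs : s.length ≤ n) : ovd n s t ≤ n :=
  Nat.sInf_le (ovd_mem_n s t hs)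

lemma ovd_spec (s t : List (Fin n)) (hs : s.length ≤ n) :
    ovd n s t ≤ n ∧ s.drop (ovd n s t) = t.take (n - ovd n s t) :=
  Nat.sInf_mem ⟨n, ovd_mem_n s t hs⟩

noncomputable def cost (n : ℕ) (p : List (Equiv.Perm (Fin n))) : ℕ :=
  ((p.zip p.tail).map (fun q : Equiv.Perm (Fin n) × Equiv.Perm (Fin n) =>
    ovd n (List.ofFn ⇑q.1) (List.ofFn ⇑q.2))).sum

lemma cost_cons_cons (a b : Equiv.Perm (Fin n)) (p : List (Equiv.Perm (Fin n))) :
    cost n (a :: b :: p) = ovd n (List.ofFn ⇑a) (List.ofFn ⇑b) + cost n (b :: p) := by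
  simp [cost]

noncomputable def chainWord (n : ℕ) : Equiv.Perm (Fin n) → List (Equiv.Perm (Fin n)) → List (Fin n)
  | h, [] => List.ofFn ⇑h
  | h, h' :: rest =>
      List.ofFn ⇑h ++ (chainWord n h' rest).drop (n - ovd n (List.ofFn ⇑h) (List.ofFn ⇑h'))

lemma chainWord_prefix (h : Equiv.Perm (Fin n)) (p : List (Equiv.Perm (Fin n))) :
    List.ofFn ⇑h <+: chainWord n h p := by
  cases p with
  | nil => exact List.prefix_refl _
  | cons h' rest => exact ⟨_, rfl⟩

lemma chainWord_eq_cons (h h' : Equiv.Perm (Fin n)) (rest : List (Equiv.Perm (Fin n))) :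
    chainWord n h (h' :: rest) =
      (List.ofFn ⇑h).take (ovd n (List.ofFn ⇑h) (List.ofFn ⇑h')) ++ chainWord n h' rest := by
  obtain ⟨hle, heq⟩ := ovd_spec (List.ofFn ⇑h) (List.ofFn ⇑h') (by simp)
  obtain ⟨u, hu⟩ := chainWord_prefix h' rest
  set k := ovd n (List.ofFn ⇑h) (List.ofFn ⇑h') with hk
  show List.ofFn ⇑h ++ (chainWord n h' rest).drop (n - k) = _
  rw [← hu, List.drop_append_of_le_length (by simp)]
  conv_lhs => rw [← List.take_append_drop k (List.ofFn ⇑h), heq]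
  simp only [List.append_assoc]
  congr 1
  rw [← List.append_assoc, List.take_append_drop]

lemma chainWord_length (h : Equiv.Perm (Fin n)) (p : List (Equiv.Perm (Fin n))) :
    (chainWord n h p).length = n + cost n (h :: p) := by
  induction p generalizing h with
  | nil => simp [chainWord, cost]
  | cons h' rest ih =>
      rw [chainWord_eq_cons, cost_cons_cons]
      have hle := ovd_le_n (n := n) (List.ofFn ⇑h) (List.ofFn ⇑h') (by simp)
      rw [List.length_append, List.length_take, ih h', List.length_ofFn]
      omega

lemma chainWord_infix (h : Equiv.Perm (Fin n)) (p : List (Equiv.Perm (Fin n)))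
    (σ : Equiv.Perm (Fin n)) (hσ : σ ∈ h :: p) :
    List.ofFn ⇑σ <:+: chainWord n h p := by
  induction p generalizing h with
  | nil =>
      simp at hσ
      subst hσ
      exact List.infix_refl _
  | cons h' rest ih =>
      rcases List.mem_cons.mp hσ with rfl | hmem
      · exact (chainWord_prefix σ _).isInfix
      · have : List.ofFn ⇑σ <:+: chainWord n h' rest := ih h' hmem
        refine this.trans ?_
        rw [chainWord_eq_cons]
        exact (List.suffix_append _ _).isInfix

end aux

theorem stmt_15 (n : ℕ) (hn : 1 ≤ n) :
    sInf {k | ∃ w : List (Fin n), IsSuperperm n w ∧ w.length = k} =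
      n + sInf {m | ∃ p : List (Equiv.Perm (Fin n)),
        (∀ σ : Equiv.Perm (Fin n), p.count σ = 1) ∧
        m = ((p.zip p.tail).map (fun q : Equiv.Perm (Fin n) × Equiv.Perm (Fin n) => ovd n (List.ofFn ⇑q.1) (List.ofFn ⇑q.2))).sum} := by
  classical
  set T : Set ℕ := {m | ∃ p : List (Equiv.Perm (Fin n)),
        (∀ σ : Equiv.Perm (Fin n), p.count σ = 1) ∧
        m = ((p.zip p.tail).map (fun q : Equiv.Perm (Fin n) × Equiv.Perm (Fin n) => ovd n (List.ofFn ⇑q.1) (List.ofFn ⇑q.2))).sum} with hT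
  set S : Set ℕ := {k | ∃ w : List (Fin n), IsSuperperm n w ∧ w.length = k} with hS
  have hTmem : ∀ p : List (Equiv.Perm (Fin n)), (∀ σ, p.count σ = 1) → cost n p ∈ T :=
    fun p hp => ⟨p, hp, rfl⟩
  have hcount₀ : ∀ σ : Equiv.Perm (Fin n),
      ((Finset.univ : Finset (Equiv.Perm (Fin n))).toList).count σ = 1 :=
    fun σ => List.count_eq_one_of_mem (Finset.nodup_toList _)
      (Finset.mem_toList.mpr (Finset.mem_univ σ))
  have hTne : T.Nonempty := ⟨_, hTmem _ hcount₀⟩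
  -- upper bound: build a word from an optimal ordering
  obtain ⟨p, hpc, hpm⟩ := Nat.sInf_mem hTne
  have hp1 : (1 : Equiv.Perm (Fin n)) ∈ p := by
    rw [← List.count_pos_iff]
    rw [hpc]; exact one_pos
  obtain ⟨h, rest, rfl⟩ := List.exists_cons_of_ne_nil (List.ne_nil_of_mem hp1)
  have hsuper : IsSuperperm n (chainWord n h rest) := by
    intro σ
    apply chainWord_infix
    rw [← List.count_pos_iff, hpc σ]; exact one_pos
  have hSmem : (chainWord n h rest).length ∈ S := ⟨_, hsuper, rfl⟩
  have hSne : S.Nonempty := ⟨_, hSmem⟩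
  have hlen : (chainWord n h rest).length = n + sInf T := by
    rw [chainWord_length, hpm]; rfl
  refine le_antisymm (hlen ▸ Nat.sInf_le hSmem) ?_
  refine le_csInf hSne ?_
  rintro L ⟨w, hw, rfl⟩
  -- occurrence positions
  have hocc : ∀ σ : Equiv.Perm (Fin n), ∃ k, k + n ≤ w.length ∧ (w.drop k).take n = List.ofFn ⇑σ := by
    intro σ
    obtain ⟨s, t, hst⟩ := hw σ
    refine ⟨s.length, ?_, ?_⟩
    · rw [← hst]; simp
    · rw [← hst, List.append_assoc, List.drop_left, List.take_left' (by simp)]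
  choose o ho1 ho2 using hocc
  have hkey : ∀ a b : Equiv.Perm (Fin n), o a ≤ o b →
      ovd n (List.ofFn ⇑a) (List.ofFn ⇑b) ≤ o b - o a := by
    intro a b hab
    by_cases hle : o b - o a ≤ n
    · apply Nat.sInf_le
      refine ⟨hle, ?_⟩
      rw [← ho2 a, ← ho2 b]
      rw [List.drop_take, List.drop_drop, List.take_take]
      have h1 : o a + (o b - o a) = o b := by omega
      have h2 : min (n - (o b - o a)) n = n - (o b - o a) := by omega
      rw [h1, h2]
    · exact (ovd_le_n _ _ (by simp)).trans (by omega)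
  -- telescoping bound for sorted chains
  have telescope : ∀ (q : List (Equiv.Perm (Fin n))) (a : Equiv.Perm (Fin n)),
      List.Chain' (fun x y => o x ≤ o y) (a :: q) →
      cost n (a :: q) + o a ≤ o ((a :: q).getLast (List.cons_ne_nil a q)) := by
    intro q
    induction q with
    | nil => intro a _; simp [cost]
    | cons b rest ih =>
        intro a hch
        rw [List.Chain', List.isChain_cons_cons] at hch
        have h1 := hkey a b hch.1
        have h2 := ih b hch.2
        rw [cost_cons_cons, List.getLast_cons (List.cons_ne_nil b rest)]
        omega
  -- sort all permutations by occurrence position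
  set r : Equiv.Perm (Fin n) → Equiv.Perm (Fin n) → Prop := fun a b => o a ≤ o b with hr
  haveI : DecidableRel r := fun a b => inferInstanceAs (Decidable (o a ≤ o b))
  haveI : IsTotal (Equiv.Perm (Fin n)) r := ⟨fun a b => le_total _ _⟩
  haveI : IsTrans (Equiv.Perm (Fin n)) r := ⟨fun a b c => le_trans⟩
  set P := List.insertionSort r (Finset.univ : Finset (Equiv.Perm (Fin n))).toList with hP
  have hperm := List.perm_insertionSort r (Finset.univ : Finset (Equiv.Perm (Fin n))).toList
  have hPcount : ∀ σ, P.count σ = 1 := fun σ => (hperm.count_eq σ).trans (hcount₀ σ)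
  have hPsorted : P.Pairwise r := List.pairwise_insertionSort r _
  have hPne : P ≠ [] := by
    apply List.ne_nil_of_mem (a := (1 : Equiv.Perm (Fin n)))
    rw [← List.count_pos_iff, hPcount]; exact one_pos
  obtain ⟨a, q, hPq⟩ := List.exists_cons_of_ne_nil hPne
  have hch : List.Chain' (fun x y => o x ≤ o y) (a :: q) := by
    have := hPsorted.isChain
    rw [hPq] at this
    exact this
  have hbound := telescope q a hch
  have hlast := ho1 ((a :: q).getLast (List.cons_ne_nil a q))
  have hn' := ho1 (1 : Equiv.Perm (Fin n))
  have hTle : sInf T ≤ cost n (a :: q) := Nat.sInf_le (hPq ▸ hTmem P hPcount)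
  omega
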